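/- With H(a,x) = -√(x(1-x))/(2·√(1-ax)³), one has 𝒟₁(1/√(x(1-x)(1-ax))) = ∂H(a,x)/∂x, where 𝒟₁ = a(1-a)∂²/∂a² + (1-2a)∂/∂a - 1/4 acts in the variable a. -/

import Mathlib

open Real

private lemma sqrt_inv_hasDeriv (x s : ℝ) (h : 0 < 1 - s * x) :
    HasDerivAt (fun u : ℝ => (Real.sqrt (1 - u * x))⁻¹)
      (x / (2 * Real.sqrt (1 - s * x) * (1 - s * x))) s := by
  have hg : HasDerivAt (fun u : ℝ => 1 - u * x) (-x) s := by
    simpa using ((hasDerivAt_id s).mul_const x).const_sub 1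
  have hs : HasDerivAt (fun u : ℝ => Real.sqrt (1 - u * x))
      (1 / (2 * Real.sqrt (1 - s * x)) * (-x)) s :=
    (Real.hasDerivAt_sqrt (ne_of_gt h)).comp s hg
  have hne : Real.sqrt (1 - s * x) ≠ 0 := by positivity
  have := hs.inv hne
  refine this.congr_deriv ?_
  rw [Real.sq_sqrt h.le]
  field_simp

/-- With `H(a,x) = -√(x(1-x))/(2·√(1-ax)³)`, one has
`𝒟₁(1/√(x(1-x)(1-ax))) = ∂H(a,x)/∂x`, where
`𝒟₁ = a(1-a)∂²/∂a² + (1-2a)∂/∂a - 1/4` acts in the variable `a`.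
Here `x ∈ (0,1)` and `a` is such that `1 - a·t > 0` on `[0,1]`, so the positive real
square roots give fixed consistent branches. -/
theorem stmt3 (a x : ℝ) (hx0 : 0 < x) (hx1 : x < 1)
    (ha : ∀ t ∈ Set.Icc (0:ℝ) 1, 0 < 1 - a * t) :
    a * (1 - a) * deriv (fun s => deriv (fun u => (Real.sqrt (x * (1 - x) * (1 - u * x)))⁻¹) s) a
      + (1 - 2 * a) * deriv (fun u => (Real.sqrt (x * (1 - x) * (1 - u * x)))⁻¹) a
      - (1/4) * (Real.sqrt (x * (1 - x) * (1 - a * x)))⁻¹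
    = deriv (fun t => -(Real.sqrt (t * (1 - t)) / (2 * (Real.sqrt (1 - a * t))^3))) x := by
  have hax : 0 < 1 - a * x := ha x ⟨hx0.le, hx1.le⟩
  have hc : 0 < x * (1 - x) := by nlinarith
  set C : ℝ := (Real.sqrt (x * (1 - x)))⁻¹ with hC
  have hfun : (fun u : ℝ => (Real.sqrt (x * (1 - x) * (1 - u * x)))⁻¹)
      = fun u : ℝ => C * (Real.sqrt (1 - u * x))⁻¹ := by
    funext u
    rw [Real.sqrt_mul hc.le, mul_inv]
  -- first derivative
  have hF1 : ∀ s : ℝ, 0 < 1 - s * x →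
      deriv (fun u => (Real.sqrt (x * (1 - x) * (1 - u * x)))⁻¹) s
        = C * x / 2 * ((Real.sqrt (1 - s * x))⁻¹ * (1 - s * x)⁻¹) := by
    intro s hs
    rw [hfun, ((sqrt_inv_hasDeriv x s hs).const_mul C).deriv, div_eq_mul_inv, mul_inv, mul_inv]
    ring
  have hopen : IsOpen {s : ℝ | 0 < 1 - s * x} :=
    isOpen_lt continuous_const (by continuity)
  have hev : (fun s => deriv (fun u => (Real.sqrt (x * (1 - x) * (1 - u * x)))⁻¹) s)
      =ᶠ[nhds a] fun s => C * x / 2 * ((Real.sqrt (1 - s * x))⁻¹ * (1 - s * x)⁻¹) := by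
    filter_upwards [hopen.mem_nhds hax] with s hs using hF1 s hs
  -- second derivative
  have hg : HasDerivAt (fun u : ℝ => 1 - u * x) (-x) a := by
    simpa using ((hasDerivAt_id a).mul_const x).const_sub 1
  have h1 : HasDerivAt (fun s : ℝ => (Real.sqrt (1 - s * x))⁻¹)
      (x / (2 * Real.sqrt (1 - a * x) * (1 - a * x))) a := sqrt_inv_hasDeriv x a hax
  have h2 : HasDerivAt (fun s : ℝ => (1 - s * x)⁻¹) (- -x / (1 - a * x)^2) a :=
    hg.inv hax.ne'
  have hG : HasDerivAt (fun s : ℝ => C * x / 2 * ((Real.sqrt (1 - s * x))⁻¹ * (1 - s * x)⁻¹))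
      (C * x / 2 * ((x / (2 * Real.sqrt (1 - a * x) * (1 - a * x))) * (1 - a * x)⁻¹
        + (Real.sqrt (1 - a * x))⁻¹ * (- -x / (1 - a * x)^2))) a :=
    (h1.mul h2).const_mul (C * x / 2)
  have hD2 : deriv (fun s => deriv (fun u => (Real.sqrt (x * (1 - x) * (1 - u * x)))⁻¹) s) a
      = C * x / 2 * ((x / (2 * Real.sqrt (1 - a * x) * (1 - a * x))) * (1 - a * x)⁻¹
        + (Real.sqrt (1 - a * x))⁻¹ * (- -x / (1 - a * x)^2)) := by
    rw [hev.deriv_eq]; exact hG.deriv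
  -- RHS derivative
  have hnum : HasDerivAt (fun t : ℝ => Real.sqrt (t * (1 - t)))
      (1 / (2 * Real.sqrt (x * (1 - x))) * (1 - 2 * x)) x := by
    have hin : HasDerivAt (fun t : ℝ => t * (1 - t)) (1 - 2 * x) x := by
      have := (hasDerivAt_id x).mul ((hasDerivAt_const x (1:ℝ)).sub (hasDerivAt_id x))
      simp only [id_eq] at this
      refine this.congr_deriv ?_
      simp only [Pi.sub_apply, id_eq]
      ring
    exact (Real.hasDerivAt_sqrt hc.ne').comp x hin
  have hden : HasDerivAt (fun t : ℝ => 2 * (Real.sqrt (1 - a * t))^3)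
      (2 * (3 * (Real.sqrt (1 - a * x))^2 * (1 / (2 * Real.sqrt (1 - a * x)) * (-a)))) x := by
    have hg2 : HasDerivAt (fun t : ℝ => 1 - a * t) (-a) x := by
      simpa using ((hasDerivAt_id x).const_mul a).const_sub 1
    have hs2 : HasDerivAt (fun t : ℝ => Real.sqrt (1 - a * t))
        (1 / (2 * Real.sqrt (1 - a * x)) * (-a)) x :=
      (Real.hasDerivAt_sqrt hax.ne').comp x hg2
    exact (hs2.pow 3).const_mul 2
  have hdne : 2 * (Real.sqrt (1 - a * x))^3 ≠ 0 := by positivity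
  have hRHS : deriv (fun t => -(Real.sqrt (t * (1 - t)) / (2 * (Real.sqrt (1 - a * t))^3))) x = _ :=
    ((hnum.div hden hdne).neg).deriv
  rw [hRHS, hD2, hF1 a hax, Real.sqrt_mul hc.le (1 - a * x), mul_inv]
  set s1 := Real.sqrt (x * (1 - x)) with hs1
  set s2 := Real.sqrt (1 - a * x) with hs2eq
  have hs1p : 0 < s1 := Real.sqrt_pos.mpr hc
  have hs2p : 0 < s2 := Real.sqrt_pos.mpr hax
  have hq1 : s1 ^ 2 = x * (1 - x) := Real.sq_sqrt hc.le
  have hq2 : s2 ^ 2 = 1 - a * x := Real.sq_sqrt hax.le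
  rw [show (2 * s2 ^ 3) ^ 2 = 4 * (1 - a*x)^3 by rw [← hq2]; ring,
      show s2 ^ 3 = s2 * (1 - a*x) by rw [← hq2]; ring,
      show s2 ^ 2 = 1 - a*x from hq2, hC]
  have hne1 : s1 ≠ 0 := hs1p.ne'
  have hne2 : s2 ≠ 0 := hs2p.ne'
  apply mul_left_cancel₀ (mul_ne_zero hne1 hne2)
  have e12 : s1 ^ 2 = x * (1 - x) := hq1
  have e14 : s1 ^ 4 = (x * (1 - x)) ^ 2 := by rw [← hq1]; ring
  have e16 : s1 ^ 6 = (x * (1 - x)) ^ 3 := by rw [← hq1]; ring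
  have e22 : s2 ^ 2 = 1 - a * x := hq2
  have e24 : s2 ^ 4 = (1 - a * x) ^ 2 := by rw [← hq2]; ring
  have e26 : s2 ^ 6 = (1 - a * x) ^ 3 := by rw [← hq2]; ring
  have e28 : s2 ^ 8 = (1 - a * x) ^ 4 := by rw [← hq2]; ring
  field_simp
  ring_nf
  linear_combination (4 - 8*x) * hq2 + 12*a * hq1
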